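/- Fix a C-sequence ⟨C_α : α < ω₁⟩ and a coherent family of injections ⟨f_α : α < ω₁ a limit ordinal⟩. Then for every limit ordinal α < ω₁, the set {x ∈ ([ω]^{<ω})^ω : sup(⋃ₙ D_α^x(n)) = α} is comeager in the product space ([ω]^{<ω})^ω. -/

import Mathlib

noncomputable section

open Set Ordinal

/-- The first uncountable ordinal. -/
def omega1 : Ordinal := (Cardinal.aleph 1).ord

/-- `C` is a C-sequence: `C 0 = ∅`, `C (α+1) = {α}`, and for every limit `α < ω₁`,
`C α` is a cofinal subset of `α` meeting every initial segment in a finite set. -/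
def IsCSeq (C : Ordinal → Set Ordinal) : Prop :=
  C 0 = ∅ ∧ (∀ α, C (α + 1) = {α}) ∧
  ∀ α, α < omega1 → Order.IsSuccLimit α →
    (∀ ξ ∈ C α, ξ < α) ∧ (∀ ξ < α, ∃ η ∈ C α, ξ ≤ η) ∧ ∀ ξ < α, (C α ∩ Iio ξ).Finite

/-- `ζ` is a successor ordinal. -/
def IsSuccOrd (ζ : Ordinal) : Prop := ∃ η, ζ = η + 1

/-- `Cnth α` enumerates `C α` in increasing order, for every limit `α < ω₁`
(recall that such `C α` has order type `ω`). -/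
def EnumSpec (C : Ordinal → Set Ordinal) (Cnth : Ordinal → ℕ → Ordinal) : Prop :=
  ∀ α, α < omega1 → Order.IsSuccLimit α → StrictMono (Cnth α) ∧ Set.range (Cnth α) = C α

/-- `f` is a coherent family of injections: for each limit `α < ω₁`, `f α` is injective
on the set `suc(α)` of successor ordinals below `α`, and for limit `α < β < ω₁` the
functions `f α` and `f β` agree on all but finitely many members of `suc(α)`. -/
def CoherentInj (f : Ordinal → Ordinal → ℕ) : Prop :=
  (∀ α, α < omega1 → Order.IsSuccLimit α →
    ∀ ζ η, ζ < α → IsSuccOrd ζ → η < α → IsSuccOrd η → f α ζ = f α η → ζ = η) ∧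
  ∀ α β, α < β → β < omega1 → Order.IsSuccLimit α → Order.IsSuccLimit β →
    {ζ | ζ < α ∧ IsSuccOrd ζ ∧ f α ζ ≠ f β ζ}.Finite

/-- The Cohen forcing `ℙ = Fn(ω, [ω]^{<ω})`: finite partial functions from `ω` to the
finite subsets of `ω`. -/
def PFn : Type := {p : ℕ → Option (Finset ℕ) // {n | p n ≠ none}.Finite}

/-- `p` extends `q` (i.e. `p ≤ q` in the Cohen forcing). -/
def PExt (p q : PFn) : Prop := ∀ n s, q.1 n = some s → p.1 n = some s

/-- `[ω]^{<ω}` carries the discrete topology; the space `([ω]^{<ω})^ω` then carries the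
product topology. -/
instance : TopologicalSpace (Finset ℕ) := ⊥

instance : DiscreteTopology (Finset ℕ) := ⟨rfl⟩

/-- `D_α^x(n) = {ζ ∈ suc(α) : C_α(n) ≤ ζ < C_α(n+1) and f_α(ζ) ∈ x(n)}`. -/
def Dset (Cnth : Ordinal → ℕ → Ordinal) (f : Ordinal → Ordinal → ℕ)
    (α : Ordinal) (x : ℕ → Finset ℕ) (n : ℕ) : Set Ordinal :=
  {ζ | ζ < α ∧ IsSuccOrd ζ ∧ Cnth α n ≤ ζ ∧ ζ < Cnth α (n + 1) ∧ f α ζ ∈ x n}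

/-- For every limit `α < ω₁`, the set of `x ∈ ([ω]^{<ω})^ω` with
`sup (⋃ n, D_α^x(n)) = α` is comeager in the product space `([ω]^{<ω})^ω`. -/
theorem stmt13 (C : Ordinal → Set Ordinal) (hC : IsCSeq C)
    (Cnth : Ordinal → ℕ → Ordinal) (hCnth : EnumSpec C Cnth)
    (f : Ordinal → Ordinal → ℕ) (hf : CoherentInj f) :
    ∀ α, α < omega1 → Order.IsSuccLimit α →
      {x : ℕ → Finset ℕ | sSup (⋃ n, Dset Cnth f α x n) = α} ∈
        residual (ℕ → Finset ℕ) := by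
  intro α hα hlim
  classical
  obtain ⟨hmono, hrange⟩ := hCnth α hα hlim
  obtain ⟨hlt, hcof, _⟩ := hC.2.2 α hα hlim
  -- every Cnth α n is < α
  have hCnlt : ∀ n, Cnth α n < α := fun n => hlt _ (hrange ▸ Set.mem_range_self n)
  -- good intervals: for every m there is n ≥ m whose interval contains a successor ordinal
  have hgood : ∀ m : ℕ, ∃ n, m ≤ n ∧ ∃ ζ, ζ < α ∧ IsSuccOrd ζ ∧
      Cnth α n ≤ ζ ∧ ζ < Cnth α (n + 1) := by
    intro m
    set ζ := Cnth α m + 1 with hζ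
    have hζα : ζ < α := by
      have := hlim.succ_lt (hCnlt m)
      rwa [← Ordinal.add_one_eq_succ] at this
    have hζ1α : ζ + 1 < α := by
      have := hlim.succ_lt hζα
      rwa [← Ordinal.add_one_eq_succ] at this
    obtain ⟨η, hηC, hηge⟩ := hcof (ζ + 1) hζ1α
    obtain ⟨j, rfl⟩ := hrange ▸ hηC
    have hj : ζ < Cnth α j := lt_of_lt_of_le (lt_of_lt_of_le (lt_add_one ζ) le_rfl) hηge
    have hex : ∃ j, ζ < Cnth α j := ⟨j, hj⟩
    set j₀ := Nat.find hex with hj₀def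
    have hj₀ : ζ < Cnth α j₀ := Nat.find_spec hex
    have hj₀pos : 0 < j₀ := by
      rcases Nat.eq_zero_or_pos j₀ with h0 | h
      · exfalso
        have h0' : ζ < Cnth α 0 := h0 ▸ hj₀
        have : Cnth α 0 ≤ Cnth α m := hmono.monotone (Nat.zero_le m)
        have : Cnth α 0 < ζ := lt_of_le_of_lt this (lt_add_one _)
        exact absurd h0' (not_lt.mpr this.le)
      · exact h
    refine ⟨j₀ - 1, ?_, ζ, hζα, ⟨Cnth α m, rfl⟩, ?_, ?_⟩
    · -- m ≤ j₀ - 1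
      have hmj : m < j₀ := hmono.lt_iff_lt.mp (lt_trans (lt_add_one _) hj₀)
      omega
    · -- Cnth α (j₀-1) ≤ ζ
      have := Nat.find_min hex (show j₀ - 1 < j₀ by omega)
      exact not_lt.mp this
    · -- ζ < Cnth α (j₀ - 1 + 1)
      have : j₀ - 1 + 1 = j₀ := by omega
      rw [this]; exact hj₀
  -- the open dense sets
  set A : ℕ → Set (ℕ → Finset ℕ) := fun k =>
    ⋃ n ∈ {n : ℕ | k ≤ n}, (fun x : ℕ → Finset ℕ => x n) ⁻¹'
      {s : Finset ℕ | ∃ ζ, ζ < α ∧ IsSuccOrd ζ ∧ Cnth α n ≤ ζ ∧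
        ζ < Cnth α (n + 1) ∧ f α ζ ∈ s} with hA
  have hAopen : ∀ k, IsOpen (A k) := by
    intro k
    refine isOpen_biUnion fun n _ => ?_
    exact (isOpen_discrete _).preimage (continuous_apply n)
  have hAdense : ∀ k, Dense (A k) := by
    intro k
    rw [dense_iff_inter_open]
    intro U hU ⟨x, hxU⟩
    obtain ⟨I, u, hIu, hsub⟩ := isOpen_pi_iff.mp hU x hxU
    obtain ⟨n, hn, ζ, hζα, hζs, hζl, hζu⟩ := hgood (k + (I.sup id) + 1)
    have hnI : n ∉ I := by
      intro hnI
      have : n ≤ I.sup id := Finset.le_sup (f := id) hnI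
      omega
    refine ⟨Function.update x n {f α ζ}, ?_, ?_⟩
    · apply hsub
      intro a ha
      rw [Function.update_of_ne (by rintro rfl; exact hnI ha)]
      exact (hIu a ha).2
    · refine Set.mem_biUnion (show k ≤ n by omega) ?_
      refine ⟨ζ, hζα, hζs, hζl, hζu, ?_⟩
      show f α ζ ∈ Function.update x n {f α ζ} n
      rw [Function.update_self]
      exact Finset.mem_singleton_self _
  -- the intersection is in the residual filter
  have hinter : (⋂ k, A k) ∈ residual (ℕ → Finset ℕ) :=
    countable_iInter_mem.mpr fun k => residual_of_dense_open (hAopen k) (hAdense k)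
  refine Filter.mem_of_superset hinter ?_
  intro x hx
  simp only [Set.mem_iInter] at hx
  have hxA : ∀ k, ∃ n, k ≤ n ∧ ∃ ζ ∈ Dset Cnth f α x n, True := by
    intro k
    obtain ⟨n, hn, hmem⟩ := Set.mem_iUnion₂.mp (hx k)
    obtain ⟨ζ, h1, h2, h3, h4, h5⟩ := hmem
    exact ⟨n, hn, ζ, ⟨h1, h2, h3, h4, h5⟩, trivial⟩
  have hbdd : BddAbove (⋃ n, Dset Cnth f α x n) := by
    refine ⟨α, ?_⟩
    rintro ζ hζ
    obtain ⟨_, ⟨n, rfl⟩, hζn⟩ := hζ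
    exact hζn.1.le
  apply le_antisymm
  · exact csSup_le' fun ζ hζ => by
      obtain ⟨_, ⟨n, rfl⟩, hζn⟩ := hζ
      exact hζn.1.le
  · refine le_of_forall_lt fun ξ hξ => ?_
    have hξ1 : ξ + 1 < α := by
      have := hlim.succ_lt hξ
      rwa [← Ordinal.add_one_eq_succ] at this
    obtain ⟨η, hηC, hηge⟩ := hcof (ξ + 1) hξ1
    obtain ⟨m, rfl⟩ := hrange ▸ hηC
    obtain ⟨n, hn, ζ, hζD, -⟩ := hxA m
    have hζbig : ξ < ζ := by
      calc ξ < ξ + 1 := lt_add_one ξ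
        _ ≤ Cnth α m := hηge
        _ ≤ Cnth α n := hmono.monotone hn
        _ ≤ ζ := hζD.2.2.1
    calc ξ < ζ := hζbig
      _ ≤ sSup (⋃ n, Dset Cnth f α x n) :=
        le_csSup hbdd (Set.mem_iUnion.mpr ⟨n, hζD⟩)
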